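/- For every t ≥ 0, the solution ψ(t) = exp(−itH) s of the Schrödinger equation i dψ/dt = Hψ with ψ(0) = s is given explicitly by ψ(t) = e^{−iEt} { [y cos(Eyt) − i sin(Eyt)] w̃ + √(1 − y²) cos(Eyt) r }, where y = √(ℓ/N). -/

import Mathlib

open scoped BigOperators
noncomputable section

local notation "⟪" x ", " y "⟫" => @inner ℂ _ _ x y

lemma exp_apply_eigenvector {F : Type*} [NormedAddCommGroup F] [InnerProductSpace ℂ F]
    [CompleteSpace F] (A : F →L[ℂ] F) (v : F) (μ : ℂ) (h : A v = μ • v) :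
    NormedSpace.exp A v = Complex.exp μ • v := by
  have hpow : ∀ n : ℕ, (A ^ n) v = μ ^ n • v := by
    intro n
    induction n with
    | zero => simp
    | succ n ih =>
      rw [pow_succ, ContinuousLinearMap.mul_apply, h, map_smul, ih, smul_smul,
        pow_succ, mul_comm]
  have hsum : Summable fun n : ℕ => ((n.factorial : ℂ))⁻¹ • A ^ n :=
    NormedSpace.expSeries_summable' A
  have h1 : NormedSpace.exp A v = ∑' n : ℕ, (((n.factorial : ℂ))⁻¹ • A ^ n) v := by
    rw [NormedSpace.exp_eq_tsum ℂ]
    exact ((ContinuousLinearMap.apply ℂ F v).map_tsum hsum)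
  rw [h1]
  have h2 : ∀ n : ℕ, (((n.factorial : ℂ))⁻¹ • A ^ n) v
      = (((n.factorial : ℂ))⁻¹ * μ ^ n) • v := by
    intro n
    rw [ContinuousLinearMap.smul_apply, hpow, smul_smul]
  simp_rw [h2]
  rw [Summable.tsum_smul_const, Complex.exp_eq_exp_ℂ, NormedSpace.exp_eq_tsum ℂ]
  · simp [smul_eq_mul]
  · simpa [smul_eq_mul] using NormedSpace.expSeries_summable' (𝕂 := ℂ) μ

set_option maxHeartbeats 1600000 in
theorem explicit_solution_of_schrodinger_evolution
    (N ℓ : ℕ) (hN : 2 ≤ N) (hℓ1 : 1 ≤ ℓ) (hℓN : ℓ < N)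
    (w : Fin N → EuclideanSpace ℂ (Fin N)) (hw : Orthonormal ℂ w)
    (E : ℝ) (hE : 0 < E)
    (s : EuclideanSpace ℂ (Fin N))
    (hs : s = ((Real.sqrt N : ℂ))⁻¹ • ∑ j : Fin N, w j)
    (H : EuclideanSpace ℂ (Fin N) →L[ℂ] EuclideanSpace ℂ (Fin N))
    (hH : ∀ u, H u = (E : ℂ) •
      ((∑ j ∈ Finset.univ.filter (fun j : Fin N => (j : ℕ) < ℓ), ⟪w j, u⟫ • w j)
        + ⟪s, u⟫ • s))
    (r : EuclideanSpace ℂ (Fin N))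
    (hr : r = ((Real.sqrt (1 - (ℓ : ℝ) / N) : ℂ))⁻¹ •
      (s - ((Real.sqrt N : ℂ))⁻¹ •
        ∑ j ∈ Finset.univ.filter (fun j : Fin N => (j : ℕ) < ℓ), w j))
    (wt : EuclideanSpace ℂ (Fin N))
    (hwt : wt = ((Real.sqrt ℓ : ℂ))⁻¹ •
      ∑ j ∈ Finset.univ.filter (fun j : Fin N => (j : ℕ) < ℓ), w j)
    (y : ℝ) (hy : y = Real.sqrt ((ℓ : ℝ) / N)) :
    ∀ t : ℝ, 0 ≤ t →
      NormedSpace.exp ((-(Complex.I * (t : ℂ))) • H) s =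
        Complex.exp (-(Complex.I * (E : ℂ) * (t : ℂ))) •
          (((y : ℂ) * (Real.cos (E * y * t) : ℂ)
              - Complex.I * (Real.sin (E * y * t) : ℂ)) • wt
            + ((Real.sqrt (1 - y ^ 2) : ℂ) * (Real.cos (E * y * t) : ℂ)) • r) := by
  intro t ht
  set F : Finset (Fin N) := Finset.univ.filter (fun j : Fin N => (j : ℕ) < ℓ) with hF
  -- numeric facts
  have hNpos : (0:ℝ) < (N:ℝ) := by exact_mod_cast Nat.pos_of_ne_zero (by omega)
  have hlpos : (0:ℝ) < (ℓ:ℝ) := by exact_mod_cast hℓ1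
  have hlN : (ℓ:ℝ) < (N:ℝ) := by exact_mod_cast hℓN
  set sN := Real.sqrt (N:ℝ) with hsN
  set sl := Real.sqrt (ℓ:ℝ) with hsl
  have hsNpos : 0 < sN := Real.sqrt_pos.mpr hNpos
  have hslpos : 0 < sl := Real.sqrt_pos.mpr hlpos
  have hsN2 : sN^2 = (N:ℝ) := Real.sq_sqrt hNpos.le
  have hsl2 : sl^2 = (ℓ:ℝ) := Real.sq_sqrt hlpos.le
  have hfrac : (ℓ:ℝ)/N < 1 := (div_lt_one hNpos).mpr hlN
  set c := Real.sqrt (1 - (ℓ:ℝ)/N) with hcdef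
  have hcpos : 0 < c := Real.sqrt_pos.mpr (by linarith)
  have hc2 : c^2 = 1 - (ℓ:ℝ)/N := Real.sq_sqrt (by linarith)
  have hy2 : y^2 = (ℓ:ℝ)/N := by rw [hy]; exact Real.sq_sqrt (by positivity)
  have hypos : 0 < y := by rw [hy]; positivity
  have hyc : y = sl / sN := by rw [hy, hsl, hsN]; exact Real.sqrt_div hlpos.le _
  have hysN : y * sN = sl := by rw [hyc]; field_simp
  have hc2y : c^2 = 1 - y^2 := by rw [hc2, hy2]
  have hsqrt1y : Real.sqrt (1 - y^2) = c := by rw [hy2]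
  -- complex versions
  have hcne : ((c:ℂ)) ≠ 0 := by exact_mod_cast hcpos.ne'
  have hslne : ((sl:ℂ)) ≠ 0 := by exact_mod_cast hslpos.ne'
  have hsNne : ((sN:ℂ)) ≠ 0 := by exact_mod_cast hsNpos.ne'
  have hc2ℂ : (c:ℂ)^2 = 1 - (y:ℂ)^2 := by
    rw [← Complex.ofReal_pow, hc2y]; push_cast; ring
  have hysNℂ : (y:ℂ) * (sN:ℂ) = (sl:ℂ) := by exact_mod_cast hysN
  have hsl2ℂ : (sl:ℂ)^2 = (ℓ:ℂ) := by exact_mod_cast hsl2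
  have hsN2ℂ : (sN:ℂ)^2 = (N:ℂ) := by exact_mod_cast hsN2
  -- cardinality
  have hcard : F.card = ℓ := by
    have : F = Finset.map (Fin.castLEEmb hℓN.le) Finset.univ := by
      rw [hF]
      ext j
      simp only [Finset.mem_filter, Finset.mem_univ, true_and, Finset.mem_map, Fin.castLEEmb]
      constructor
      · intro hj; exact ⟨⟨j, hj⟩, by simp⟩
      · rintro ⟨i, rfl⟩; simpa using i.2
    rw [this, Finset.card_map, Finset.card_univ, Fintype.card_fin]
  -- inner products of basis sums
  have horth : ∀ i j, ⟪w i, w j⟫ = if i = j then 1 else 0 := orthonormal_iff_ite.mp hw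
  have hwu : ∀ j ∈ F, ⟪w j, ∑ k ∈ F, w k⟫ = 1 := by
    intro j hj
    rw [inner_sum]
    simp only [horth]
    rw [Finset.sum_ite_eq]
    simp [hj]
  have hwS : ∀ j : Fin N, ⟪w j, ∑ k : Fin N, w k⟫ = 1 := by
    intro j
    rw [inner_sum]
    simp only [horth]
    rw [Finset.sum_ite_eq]
    simp
  have hSu : ⟪∑ k : Fin N, w k, ∑ j ∈ F, w j⟫ = (ℓ:ℂ) := by
    rw [sum_inner]
    have h' : ∀ k : Fin N, ⟪w k, ∑ j ∈ F, w j⟫ = if k ∈ F then 1 else 0 := by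
      intro k
      rw [inner_sum]
      simp only [horth]
      rw [Finset.sum_ite_eq]
    simp only [h']
    rw [Finset.sum_ite_mem, Finset.univ_inter, Finset.sum_const, hcard]
    simp
  have hSS : ⟪∑ k : Fin N, w k, ∑ j : Fin N, w j⟫ = (N:ℂ) := by
    rw [sum_inner]
    simp only [hwS]
    simp
  -- inner products with s, wt, r
  have hws : ∀ j : Fin N, ⟪w j, s⟫ = ((sN:ℂ))⁻¹ := by
    intro j; rw [hs, inner_smul_right, hwS, mul_one]
  have hwwt : ∀ j ∈ F, ⟪w j, wt⟫ = ((sl:ℂ))⁻¹ := by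
    intro j hj; rw [hwt, inner_smul_right, hwu j hj, mul_one]
  have hwr : ∀ j ∈ F, ⟪w j, r⟫ = 0 := by
    intro j hj
    rw [hr, inner_smul_right, inner_sub_right, inner_smul_right, hws, hwu j hj, mul_one,
      sub_self, mul_zero]
  have hswt : ⟪s, wt⟫ = (y:ℂ) := by
    rw [hs, hwt, inner_smul_right, inner_smul_left, hSu, map_inv₀, Complex.conj_ofReal]
    field_simp
    linear_combination -hsl2ℂ - (sl:ℂ)*hysNℂ
  have hss : ⟪s, s⟫ = 1 := by
    rw [hs, inner_smul_right, inner_smul_left, hSS, map_inv₀, Complex.conj_ofReal]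
    field_simp
    linear_combination -hsN2ℂ
  have hsu : ⟪s, (∑ j ∈ F, w j)⟫ = ((sN:ℂ))⁻¹ * (ℓ:ℂ) := by
    rw [hs, inner_smul_left, hSu, map_inv₀, Complex.conj_ofReal]
  have hsr : ⟪s, r⟫ = (c:ℂ) := by
    rw [hr, inner_smul_right, inner_sub_right, inner_smul_right, hss, hsu]
    field_simp
    linear_combination -(sN:ℂ)^2 * hc2ℂ + ((y:ℂ)*(sN:ℂ)+(sl:ℂ)) * hysNℂ + hsl2ℂ
  -- action of H on wt and r
  have hsum_wt : ∑ j ∈ F, ⟪w j, wt⟫ • w j = wt := by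
    calc ∑ j ∈ F, ⟪w j, wt⟫ • w j = ∑ j ∈ F, ((sl:ℂ))⁻¹ • w j :=
          Finset.sum_congr rfl (fun j hj => by rw [hwwt j hj])
      _ = ((sl:ℂ))⁻¹ • ∑ j ∈ F, w j := (Finset.smul_sum).symm
      _ = wt := hwt.symm
  have hsum_r : ∑ j ∈ F, ⟪w j, r⟫ • w j = 0 :=
    Finset.sum_eq_zero fun j hj => by rw [hwr j hj, zero_smul]
  have hHwt : H wt = (E:ℂ) • (wt + (y:ℂ) • s) := by
    rw [hH wt, hsum_wt, hswt]
  have hHr : H r = (E:ℂ) • ((c:ℂ) • s) := by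
    rw [hH r, hsum_r, hsr, zero_add]
  -- s in terms of wt and r
  have hsdec : s = (y:ℂ) • wt + (c:ℂ) • r := by
    rw [hr, hwt, hs]
    match_scalars
    · field_simp
    · field_simp
      linear_combination -hysNℂ
  -- eigenvectors
  set vp : EuclideanSpace ℂ (Fin N) := (c:ℂ) • wt + (((1:ℝ) - y : ℝ):ℂ) • r with hvp
  set vm : EuclideanSpace ℂ (Fin N) := (c:ℂ) • wt - (((1:ℝ) + y : ℝ):ℂ) • r with hvm
  have hHvp : H vp = ((E * (1 + y) : ℝ):ℂ) • vp := by
    rw [hvp, map_add, map_smul, map_smul, hHwt, hHr, hsdec]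
    match_scalars
    · push_cast; ring
    · push_cast; linear_combination (E:ℂ) * hc2ℂ
  have hHvm : H vm = ((E * (1 - y) : ℝ):ℂ) • vm := by
    rw [hvm, map_sub, map_smul, map_smul, hHwt, hHr, hsdec]
    match_scalars
    · push_cast; ring
    · push_cast; linear_combination -(E:ℂ) * hc2ℂ
  -- eigenvectors of B
  have hBvp : ((-(Complex.I * (t:ℂ))) • H) vp
      = (-(Complex.I * (t:ℂ) * ((E * (1 + y) : ℝ):ℂ))) • vp := by
    rw [ContinuousLinearMap.smul_apply, hHvp, smul_smul]
    congr 1; ring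
  have hBvm : ((-(Complex.I * (t:ℂ))) • H) vm
      = (-(Complex.I * (t:ℂ) * ((E * (1 - y) : ℝ):ℂ))) • vm := by
    rw [ContinuousLinearMap.smul_apply, hHvm, smul_smul]
    congr 1; ring
  -- decompose s in eigenbasis
  have hsab : s = (((1+y)/(2*c) : ℝ):ℂ) • vp + (((y-1)/(2*c) : ℝ):ℂ) • vm := by
    rw [hvp, hvm, hsdec]
    match_scalars
    · push_cast; field_simp; ring
    · push_cast; field_simp
      linear_combination 2 * hc2ℂ
  rw [hsab, map_add, map_smul, map_smul,
    exp_apply_eigenvector _ _ _ hBvp, exp_apply_eigenvector _ _ _ hBvm]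
  -- final algebra
  set θ := E * y * t with hθ
  have hexpp : Complex.exp (-(Complex.I * (t:ℂ) * ((E * (1 + y) : ℝ):ℂ)))
      = Complex.exp (-(Complex.I * (E:ℂ) * (t:ℂ))) * Complex.exp (-(θ:ℂ) * Complex.I) := by
    rw [← Complex.exp_add]; congr 1; rw [hθ]; push_cast; ring
  have hexpm : Complex.exp (-(Complex.I * (t:ℂ) * ((E * (1 - y) : ℝ):ℂ)))
      = Complex.exp (-(Complex.I * (E:ℂ) * (t:ℂ))) * Complex.exp ((θ:ℂ) * Complex.I) := by
    rw [← Complex.exp_add]; congr 1; rw [hθ]; push_cast; ring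
  have hcos : ((Real.cos θ : ℝ):ℂ)
      = (Complex.exp ((θ:ℂ) * Complex.I) + Complex.exp (-(θ:ℂ) * Complex.I)) / 2 := by
    rw [Complex.ofReal_cos]; rfl
  have hsin : Complex.I * ((Real.sin θ : ℝ):ℂ)
      = (Complex.exp ((θ:ℂ) * Complex.I) - Complex.exp (-(θ:ℂ) * Complex.I)) / 2 := by
    rw [Complex.ofReal_sin, Complex.sin]
    linear_combination ((Complex.exp (-(θ:ℂ) * Complex.I)
      - Complex.exp ((θ:ℂ) * Complex.I)) / 2) * Complex.I_sq
  rw [hsqrt1y, hvp, hvm, hexpp, hexpm, hcos, hsin]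
  set z := Complex.exp (-(Complex.I * (E:ℂ) * (t:ℂ))) with hz
  set p := Complex.exp ((θ:ℂ) * Complex.I) with hp
  set q := Complex.exp (-(θ:ℂ) * Complex.I) with hq
  match_scalars
  · push_cast; field_simp; ring
  · push_cast; field_simp
    linear_combination (-z * (p + q)) * hc2ℂ
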